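/- Let λ : ℝ → ℝ be the inverse Mills ratio λ(z) = φ(z)/(1 − Φ(z)), where φ(z) = exp(−z²/2)/√(2π) is the standard normal density and Φ is the standard normal cumulative distribution function. Then λ is differentiable on ℝ and for every z ∈ ℝ its derivative satisfies 0 < λ'(z) < 1. -/

import Mathlib

open Real MeasureTheory

/-- Standard normal density `φ(z) = exp(−z²/2)/√(2π)`. -/
noncomputable def stdNormalPdf (z : ℝ) : ℝ :=
  Real.exp (-z ^ 2 / 2) / Real.sqrt (2 * Real.pi)

/-- Standard normal cumulative distribution function `Φ`. -/
noncomputable def stdNormalCdf (z : ℝ) : ℝ :=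
  ∫ t in Set.Iic z, stdNormalPdf t

/-- Inverse Mills ratio `λ(z) = φ(z)/(1 − Φ(z))`. -/
noncomputable def mills (z : ℝ) : ℝ :=
  stdNormalPdf z / (1 - stdNormalCdf z)

open Set Filter Topology

lemma pdf_eq : stdNormalPdf = fun z => Real.exp (-(1/2) * z ^ 2) / Real.sqrt (2 * Real.pi) := by
  funext z; unfold stdNormalPdf; ring_nf

lemma pdf_pos (z : ℝ) : 0 < stdNormalPdf z := by
  unfold stdNormalPdf
  positivity

lemma pdf_continuous : Continuous stdNormalPdf := by
  unfold stdNormalPdf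
  fun_prop

lemma pdf_integrable : Integrable stdNormalPdf := by
  rw [pdf_eq]
  exact (integrable_exp_neg_mul_sq (by norm_num : (0:ℝ) < 1/2)).div_const _

lemma integral_pdf : ∫ x, stdNormalPdf x = 1 := by
  rw [pdf_eq]
  rw [MeasureTheory.integral_div, integral_gaussian]
  rw [show π / (1/2) = 2 * π by ring]
  rw [div_self (by positivity)]

lemma hasDerivAt_cdf (z : ℝ) : HasDerivAt stdNormalCdf (stdNormalPdf z) z := by
  have heq : stdNormalCdf = fun u => (∫ t in (0:ℝ)..u, stdNormalPdf t) + stdNormalCdf 0 := by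
    funext u
    have := intervalIntegral.integral_Iic_sub_Iic (pdf_integrable.integrableOn)
      (pdf_integrable.integrableOn) (a := (0:ℝ)) (b := u) (μ := volume)
    unfold stdNormalCdf
    linarith [this]
  rw [heq]
  exact (intervalIntegral.integral_hasDerivAt_right pdf_integrable.intervalIntegrable
    pdf_continuous.stronglyMeasurable.stronglyMeasurableAtFilter
    pdf_continuous.continuousAt).add_const _

lemma one_sub_cdf (z : ℝ) : 1 - stdNormalCdf z = ∫ t in Ioi z, stdNormalPdf t := by
  have := intervalIntegral.integral_Iic_add_Ioi (b := z)
    pdf_integrable.integrableOn pdf_integrable.integrableOn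
  rw [integral_pdf] at this
  unfold stdNormalCdf
  linarith

lemma integral_Ioi_pos (z : ℝ) : 0 < ∫ t in Ioi z, stdNormalPdf t := by
  rw [setIntegral_pos_iff_support_of_nonneg_ae]
  · have : Function.support stdNormalPdf = univ := by
      ext x; simp [Function.support, (pdf_pos x).ne']
    rw [this, univ_inter]
    simp
  · exact Eventually.of_forall fun x => (pdf_pos x).le
  · exact pdf_integrable.integrableOn

lemma one_sub_cdf_pos (z : ℝ) : 0 < 1 - stdNormalCdf z := by
  rw [one_sub_cdf]; exact integral_Ioi_pos z

lemma mills_pos (z : ℝ) : 0 < mills z :=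
  div_pos (pdf_pos z) (one_sub_cdf_pos z)

lemma hasDerivAt_pdf (z : ℝ) : HasDerivAt stdNormalPdf (-z * stdNormalPdf z) z := by
  have h1 : HasDerivAt (fun z : ℝ => -z ^ 2 / 2) (-z) z := by
    have := ((hasDerivAt_pow 2 z).neg).div_const 2
    simpa using this.congr_deriv (by ring)
  have h2 := (h1.exp).div_const (Real.sqrt (2 * Real.pi))
  refine h2.congr_deriv ?_
  unfold stdNormalPdf
  ring

lemma id_mul_pdf_integrable : Integrable (fun t : ℝ => t * stdNormalPdf t) := by
  rw [pdf_eq]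
  have := (integrable_mul_exp_neg_mul_sq (by norm_num : (0:ℝ) < 1/2)).div_const
    (Real.sqrt (2 * Real.pi))
  exact this.congr (Eventually.of_forall fun x => by ring)

lemma pdf_tendsto_zero : Tendsto stdNormalPdf atTop (𝓝 0) := by
  rw [pdf_eq]
  have h1 : Tendsto (fun z : ℝ => -(1/2) * z ^ 2) atTop atBot := by
    apply Tendsto.const_mul_atTop_of_neg (by norm_num : (-(1/2) : ℝ) < 0)
    exact tendsto_pow_atTop two_ne_zero
  have := (Real.tendsto_exp_atBot.comp h1).div_const (Real.sqrt (2 * Real.pi))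
  simpa using this

lemma integral_Ioi_id_mul_pdf (z : ℝ) :
    ∫ t in Ioi z, t * stdNormalPdf t = stdNormalPdf z := by
  have h : ∫ t in Ioi z, t * stdNormalPdf t = 0 - (-stdNormalPdf z) := by
    apply integral_Ioi_of_hasDerivAt_of_tendsto'
      (f := fun t => -stdNormalPdf t)
    · intro x _
      exact (hasDerivAt_pdf x).neg.congr_deriv (by ring)
    · exact id_mul_pdf_integrable.integrableOn
    · simpa using pdf_tendsto_zero.neg
  simpa using h

lemma key_lower (z : ℝ) : z * (1 - stdNormalCdf z) < stdNormalPdf z := by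
  rw [one_sub_cdf]
  have hpos : 0 < ∫ t in Ioi z, (t - z) * stdNormalPdf t := by
    rw [setIntegral_pos_iff_support_of_nonneg_ae]
    · have hsub : Ioi z ⊆ Function.support (fun t => (t - z) * stdNormalPdf t) ∩ Ioi z := by
        intro t ht
        refine ⟨?_, ht⟩
        simp only [Function.mem_support]
        exact (mul_pos (by linarith [ht.out]) (pdf_pos t)).ne'
      calc (0 : ENNReal) < volume (Ioi z) := by simp
        _ ≤ _ := measure_mono hsub
    · filter_upwards [ae_restrict_mem measurableSet_Ioi] with t ht
      exact mul_nonneg (by linarith [ht.out]) (pdf_pos t).le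
    · have h := id_mul_pdf_integrable.sub (pdf_integrable.const_mul z)
      exact (h.congr (Filter.Eventually.of_forall fun t => by
        simp only [Pi.sub_apply]; ring)).integrableOn
  have heq : ∫ t in Ioi z, (t - z) * stdNormalPdf t
      = (∫ t in Ioi z, t * stdNormalPdf t) - z * ∫ t in Ioi z, stdNormalPdf t := by
    rw [← MeasureTheory.integral_const_mul, ← MeasureTheory.integral_sub
      id_mul_pdf_integrable.integrableOn ((pdf_integrable.const_mul z).integrableOn)]
    congr 1; funext t; ring
  rw [heq, integral_Ioi_id_mul_pdf] at hpos
  linarith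

lemma mills_gt (z : ℝ) : z < mills z := by
  rw [mills, lt_div_iff₀ (one_sub_cdf_pos z)]
  exact key_lower z

lemma hasDerivAt_mills (z : ℝ) :
    HasDerivAt mills (mills z * (mills z - z)) z := by
  have hD := one_sub_cdf_pos z
  have h := (hasDerivAt_pdf z).div
    ((hasDerivAt_const z (1:ℝ)).sub (hasDerivAt_cdf z)) hD.ne'
  have heq : mills = fun z => stdNormalPdf z / (1 - stdNormalCdf z) := rfl
  rw [heq]
  refine h.congr_deriv ?_
  simp only [Pi.sub_apply]
  field_simp
  ring

noncomputable def millsH (z : ℝ) : ℝ := (Real.sqrt (z ^ 2 + 4) - z) / 2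

lemma sqrt_sq_eq (z : ℝ) : Real.sqrt (z ^ 2 + 4) ^ 2 = z ^ 2 + 4 :=
  Real.sq_sqrt (by positivity)

lemma sqrt_gt (z : ℝ) : z < Real.sqrt (z ^ 2 + 4) := by
  have h0 : 0 < Real.sqrt (z ^ 2 + 4) := Real.sqrt_pos.mpr (by positivity)
  rcases le_or_gt z 0 with hz | hz
  · linarith
  · nlinarith [sqrt_sq_eq z]

lemma millsH_pos (z : ℝ) : 0 < millsH z := by
  have := sqrt_gt z; unfold millsH; linarith

lemma hasDerivAt_millsH (z : ℝ) :
    HasDerivAt millsH ((z / Real.sqrt (z ^ 2 + 4) - 1) / 2) z := by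
  have h1 : HasDerivAt (fun z : ℝ => z ^ 2 + 4) (2 * z) z := by
    simpa using (hasDerivAt_pow 2 z).add_const 4
  have h2 : HasDerivAt (fun z : ℝ => Real.sqrt (z ^ 2 + 4))
      (2 * z / (2 * Real.sqrt (z ^ 2 + 4))) z :=
    (Real.hasDerivAt_sqrt (by positivity)).comp z h1 |>.congr_deriv (by ring)
  have h3 := (h2.sub (hasDerivAt_id z)).div_const 2
  have hs : Real.sqrt (z ^ 2 + 4) ≠ 0 := (Real.sqrt_pos.mpr (by positivity)).ne'
  refine h3.congr_deriv ?_
  field_simp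

noncomputable def millsF (z : ℝ) : ℝ := (1 - stdNormalCdf z) - stdNormalPdf z * millsH z

lemma hasDerivAt_millsF (z : ℝ) :
    HasDerivAt millsF
      (stdNormalPdf z * (z * millsH z - (z / Real.sqrt (z ^ 2 + 4) - 1) / 2 - 1)) z := by
  have h := (((hasDerivAt_const z (1:ℝ)).sub (hasDerivAt_cdf z)).sub
    ((hasDerivAt_pdf z).mul (hasDerivAt_millsH z)))
  refine h.congr_deriv ?_
  ring

lemma deriv_millsF_neg (z : ℝ) :
    (z * millsH z - (z / Real.sqrt (z ^ 2 + 4) - 1) / 2 - 1) < 0 := by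
  set s := Real.sqrt (z ^ 2 + 4) with hs
  have hs0 : 0 < s := Real.sqrt_pos.mpr (by positivity)
  have hsq : s ^ 2 = z ^ 2 + 4 := sqrt_sq_eq z
  have hgt : z < s := sqrt_gt z
  have key : z ^ 3 + 3 * z < (z ^ 2 + 1) * s := by
    rcases le_or_gt z 0 with hz | hz
    · nlinarith
    · nlinarith [sq_nonneg ((z ^ 2 + 1) * s - (z ^ 3 + 3 * z)), sq_nonneg s]
  have hq : z / s * s = z := div_mul_cancel₀ z hs0.ne'
  unfold millsH
  rw [← hs]
  nlinarith [key, hq, hsq, hs0, mul_pos hs0 hs0]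

lemma millsF_strictAnti : StrictAnti millsF := by
  apply strictAnti_of_deriv_neg
  intro z
  rw [(hasDerivAt_millsF z).deriv]
  exact mul_neg_of_pos_of_neg (pdf_pos z) (deriv_millsF_neg z)

lemma millsF_tendsto : Tendsto millsF atTop (𝓝 0) := by
  have h1 : Tendsto (fun z => 1 - stdNormalCdf z) atTop (𝓝 0) := by
    have hle : ∀ z : ℝ, 1 ≤ z → 1 - stdNormalCdf z ≤ stdNormalPdf z := by
      intro z hz
      rw [one_sub_cdf]
      have hmono : ∫ t in Ioi z, stdNormalPdf t ≤ ∫ t in Ioi z, t * stdNormalPdf t := by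
        apply setIntegral_mono_on pdf_integrable.integrableOn
          id_mul_pdf_integrable.integrableOn measurableSet_Ioi
        intro t ht
        nlinarith [pdf_pos t, ht.out, hz]
      rw [integral_Ioi_id_mul_pdf] at hmono
      exact hmono
    apply squeeze_zero' (g := stdNormalPdf)
    · filter_upwards with z
      exact (one_sub_cdf_pos z).le
    · filter_upwards [eventually_ge_atTop (1:ℝ)] with z hz using hle z hz
    · exact pdf_tendsto_zero
  have h2 : Tendsto (fun z => stdNormalPdf z * millsH z) atTop (𝓝 0) := by
    apply squeeze_zero' (g := stdNormalPdf)
    · filter_upwards with z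
      exact mul_nonneg (pdf_pos z).le (millsH_pos z).le
    · filter_upwards [eventually_ge_atTop (0:ℝ)] with z hz
      have hH : millsH z ≤ 1 := by
        unfold millsH
        have : Real.sqrt (z ^ 2 + 4) ≤ z + 2 := by
          rw [show z ^ 2 + 4 = (z+2)^2 - 4*z by ring]
          calc Real.sqrt ((z+2)^2 - 4*z) ≤ Real.sqrt ((z+2)^2) :=
                Real.sqrt_le_sqrt (by nlinarith)
            _ = z + 2 := Real.sqrt_sq (by linarith)
        linarith
      calc stdNormalPdf z * millsH z ≤ stdNormalPdf z * 1 :=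
          mul_le_mul_of_nonneg_left hH (pdf_pos z).le
        _ = stdNormalPdf z := mul_one _
    · exact pdf_tendsto_zero
  have h3 := h1.sub h2
  rw [sub_zero] at h3
  exact h3

lemma millsF_pos (z : ℝ) : 0 < millsF z := by
  have h1 : millsF (z + 1) < millsF z := millsF_strictAnti (by linarith)
  have h2 : (0:ℝ) ≤ millsF (z + 1) := by
    apply le_of_tendsto millsF_tendsto
    filter_upwards [eventually_ge_atTop (z + 1)] with y hy
    exact (millsF_strictAnti.antitone hy)
  linarith

lemma mills_lt (z : ℝ) : mills z < (z + Real.sqrt (z ^ 2 + 4)) / 2 := by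
  have hF := millsF_pos z
  have hφ := pdf_pos z
  have hH := millsH_pos z
  have hD := one_sub_cdf_pos z
  have h1 : stdNormalPdf z * millsH z < 1 - stdNormalCdf z := by
    unfold millsF at hF; linarith
  have h2 : mills z < 1 / millsH z := by
    rw [mills]
    calc stdNormalPdf z / (1 - stdNormalCdf z)
        < stdNormalPdf z / (stdNormalPdf z * millsH z) :=
          div_lt_div_of_pos_left hφ (by positivity) h1
      _ = 1 / millsH z := by
          rw [div_eq_div_iff (by positivity) hH.ne']; ring
  have h3 : 1 / millsH z = (z + Real.sqrt (z ^ 2 + 4)) / 2 := by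
    have hsq := sqrt_sq_eq z
    have hgt := sqrt_gt z
    unfold millsH
    rw [div_eq_div_iff (by linarith : (0:ℝ) < (Real.sqrt (z ^ 2 + 4) - z) / 2).ne'
      (by norm_num : (2:ℝ) ≠ 0)]
    nlinarith
  rw [h3] at h2
  exact h2

/-- **Mills ratio derivative bound.** The inverse Mills ratio is differentiable
on `ℝ` and its derivative satisfies `0 < λ'(z) < 1` for every `z`. -/
theorem mills_differentiable_and_deriv_mem_Ioo :
    Differentiable ℝ mills ∧ ∀ z : ℝ, 0 < deriv mills z ∧ deriv mills z < 1 := by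
  constructor
  · exact fun z => (hasDerivAt_mills z).differentiableAt
  · intro z
    rw [(hasDerivAt_mills z).deriv]
    have h1 := mills_pos z
    have h2 := mills_gt z
    refine ⟨mul_pos h1 (by linarith), ?_⟩
    have h3 := mills_lt z
    have hsq := sqrt_sq_eq z
    have hgt := sqrt_gt z
    have : mills z * (mills z - z) <
        (z + Real.sqrt (z ^ 2 + 4)) / 2 * ((Real.sqrt (z ^ 2 + 4) - z) / 2) := by
      apply mul_lt_mul'' h3 (by linarith) h1.le (by linarith)
    nlinarith
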